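/- Let q ≥ 2 be an integer and define the q-th Fuss–Catalan numbers c_N = (1/((q−1)N+1))·binom(qN, N) ∈ ℚ for N ≥ 0. Then c_0 = 1 and, for every integer N ≥ 1, c_N = Σ_{(m_1,…,m_q) ∈ ℕ^q, m_1+⋯+m_q = N−1} ∏_{j=1}^{q} c_{m_j}. -/

import Mathlib

open Finset

noncomputable def FC (q n r : ℕ) : ℚ :=
  if n = 0 then 1 else (r : ℚ) / (n.factorial : ℚ) * ∏ i ∈ range (n-1), ((q : ℚ) * n + r - 1 - i)

lemma FC_zero (q r : ℕ) : FC q 0 r = 1 := by simp [FC]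

lemma FC_succ (q n r : ℕ) :
    FC q (n+1) r = (r : ℚ) / ((n+1).factorial : ℚ) * ∏ i ∈ range n, ((q : ℚ) * (n+1) + r - 1 - i) := by
  simp [FC]

lemma FC_zero_right (q n : ℕ) : FC q (n+1) 0 = 0 := by
  simp [FC_succ]

lemma FC_pascal (q n r : ℕ) :
    FC q (n+1) (r+1) = FC q (n+1) r + FC q n (r+q) := by
  cases n with
  | zero =>
    simp only [FC_succ, FC_zero, Finset.range_zero, Finset.prod_empty, Nat.factorial_one]
    push_cast; norm_num
  | succ m =>
    rw [FC_succ, FC_succ, FC_succ]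
    push_cast
    have hterm : ∀ i ∈ range (m+1), ((q : ℚ) * ((m:ℚ)+1+1) + ((r:ℚ)+1) - 1 - i)
        = (fun i : ℕ => (q : ℚ) * ((m:ℚ)+1+1) + r - i) i := by
      intro i _; push_cast; ring
    rw [Finset.prod_congr rfl hterm, Finset.prod_range_succ']
    rw [Finset.prod_range_succ (f := fun i : ℕ => (q : ℚ) * ((m:ℚ)+1+1) + r - 1 - i)]
    have hQ : ∏ i ∈ range m, ((q : ℚ) * ((m:ℚ)+1) + ((r:ℚ)+(q:ℚ)) - 1 - i)
        = ∏ i ∈ range m, ((q : ℚ) * ((m:ℚ)+1+1) + r - 1 - i) := by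
      apply Finset.prod_congr rfl
      intro i _; push_cast; ring
    rw [hQ]
    have hshift : ∀ i ∈ range m, ((q : ℚ) * ((m:ℚ)+1+1) + (r:ℚ) - ((i:ℚ)+1))
        = (fun i : ℕ => (q : ℚ) * ((m:ℚ)+1+1) + (r:ℚ) - 1 - i) i := by
      intro i _; push_cast; ring
    push_cast
    rw [Finset.prod_congr rfl hshift]
    set Q := ∏ i ∈ range m, ((q : ℚ) * ((m:ℚ)+1+1) + (r:ℚ) - 1 - (i:ℚ)) with hQdef
    have hfac : (((m+1+1).factorial : ℕ) : ℚ) = ((m:ℚ)+1+1) * ((m+1).factorial : ℚ) := by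
      rw [Nat.factorial_succ]; push_cast; ring
    have h1 : (((m+1).factorial : ℕ) : ℚ) ≠ 0 := by
      exact_mod_cast (Nat.factorial_pos (m+1)).ne'
    have h3 : ((m : ℚ)+1+1) ≠ 0 := by positivity
    rw [hfac]
    field_simp
    ring


lemma FC_shift (q n : ℕ) : FC q (n+1) 1 = FC q n q := by
  cases n with
  | zero => simp [FC_succ, FC_zero]
  | succ m =>
    rw [FC_succ, FC_succ]
    push_cast
    have h1 : ∀ i ∈ range (m+1), ((q:ℚ) * ((m:ℚ)+1+1) + 1 - 1 - (i:ℚ))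
        = (fun i : ℕ => (q:ℚ) * ((m:ℚ)+1+1) - i) i := by
      intro i _; ring
    rw [Finset.prod_congr rfl h1, Finset.prod_range_succ']
    push_cast
    have h2 : ∀ i ∈ range m, ((q:ℚ) * ((m:ℚ)+1+1) - ((i:ℚ)+1))
        = (fun i : ℕ => (q:ℚ) * ((m:ℚ)+1+1) - 1 - i) i := by
      intro i _; ring
    rw [Finset.prod_congr rfl h2]
    have h3 : ∀ i ∈ range m, ((q:ℚ) * ((m:ℚ)+1) + (q:ℚ) - 1 - (i:ℚ))
        = (fun i : ℕ => (q:ℚ) * ((m:ℚ)+1+1) - 1 - i) i := by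
      intro i _; ring
    rw [Finset.prod_congr rfl h3]
    set Q := ∏ i ∈ range m, ((q : ℚ) * ((m:ℚ)+1+1) - 1 - (i:ℚ)) with hQdef
    have hfac : (((m+1+1).factorial : ℕ) : ℚ) = ((m:ℚ)+1+1) * ((m+1).factorial : ℚ) := by
      rw [Nat.factorial_succ]; push_cast; ring
    have hf1 : (((m+1).factorial : ℕ) : ℚ) ≠ 0 := by
      exact_mod_cast (Nat.factorial_pos (m+1)).ne'
    have h4 : ((m : ℚ)+1+1) ≠ 0 := by positivity
    rw [hfac]
    field_simp
    ring


lemma FC_conv (q : ℕ) : ∀ n r : ℕ,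
    ∑ p ∈ Finset.HasAntidiagonal.antidiagonal n, FC q p.1 1 * FC q p.2 r = FC q n (r+1) := by
  intro n
  induction n with
  | zero => intro r; simp [FC_zero]
  | succ m IH =>
    intro r
    induction r with
    | zero =>
      rw [Finset.Nat.sum_antidiagonal_succ']
      simp [FC_zero, FC_zero_right]
    | succ r IH2 =>
      rw [Finset.Nat.sum_antidiagonal_succ']
      have step : ∀ p : ℕ × ℕ, FC q p.1 1 * FC q (p.2+1) (r+1)
          = FC q p.1 1 * FC q (p.2+1) r + FC q p.1 1 * FC q p.2 (r+q) := by
        intro p; rw [FC_pascal]; ring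
      simp_rw [step]
      rw [Finset.sum_add_distrib, IH (r+q)]
      have hback : FC q (m+1) 1 * FC q 0 (r+1)
            + ∑ p ∈ Finset.HasAntidiagonal.antidiagonal m, FC q p.1 1 * FC q (p.2+1) r
          = FC q (m+1) (r+1) := by
        rw [← IH2, Finset.Nat.sum_antidiagonal_succ', FC_zero, FC_zero]
      have hre : FC q (m+1) 1 * FC q 0 (r+1)
            + (∑ p ∈ Finset.HasAntidiagonal.antidiagonal m, FC q p.1 1 * FC q (p.2+1) r + FC q m (r+q+1))
          = (FC q (m+1) 1 * FC q 0 (r+1)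
            + ∑ p ∈ Finset.HasAntidiagonal.antidiagonal m, FC q p.1 1 * FC q (p.2+1) r) + FC q m (r+q+1) := by
        ring
      rw [hre, hback]
      have hp := FC_pascal q m (r+1)
      have h5 : r+1+q = r+q+1 := by omega
      rw [h5] at hp
      exact hp.symm

lemma tuple_succ (g : ℕ → ℚ) (k n : ℕ) :
    ∑ m ∈ Finset.Nat.antidiagonalTuple (k+1) n, ∏ j : Fin (k+1), g (m j)
      = ∑ p ∈ Finset.HasAntidiagonal.antidiagonal n,
          g p.1 * ∑ m ∈ Finset.Nat.antidiagonalTuple k p.2, ∏ j : Fin k, g (m j) := by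
  simp_rw [Finset.mul_sum]
  rw [Finset.sum_sigma']
  refine Finset.sum_nbij' (i := fun m => ⟨(m 0, ∑ j : Fin k, Fin.tail m j), Fin.tail m⟩)
    (j := fun x => Fin.cons x.1.1 x.2) ?_ ?_ ?_ ?_ ?_
  · intro m hm
    rw [Finset.Nat.mem_antidiagonalTuple] at hm
    simp only [Finset.mem_sigma, Finset.HasAntidiagonal.mem_antidiagonal, Finset.Nat.mem_antidiagonalTuple]
    refine ⟨?_, trivial⟩
    rw [← hm, Fin.sum_univ_succ]
    rfl
  · rintro ⟨p, m⟩ hx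
    simp only [Finset.mem_sigma, Finset.HasAntidiagonal.mem_antidiagonal,
      Finset.Nat.mem_antidiagonalTuple] at hx
    rw [Finset.Nat.mem_antidiagonalTuple, Fin.sum_cons, hx.2, hx.1]
  · intro m _
    exact Fin.cons_self_tail m
  · rintro ⟨p, m⟩ hx
    simp only [Finset.mem_sigma, Finset.HasAntidiagonal.mem_antidiagonal,
      Finset.Nat.mem_antidiagonalTuple] at hx
    simp only [Fin.cons_zero, Fin.tail_cons]
    congr 1
    rw [hx.2]
  · intro m _
    rw [Fin.prod_univ_succ]
    rfl

lemma FC_pow (q : ℕ) : ∀ k n : ℕ,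
    ∑ m ∈ Finset.Nat.antidiagonalTuple (k+1) n, ∏ j : Fin (k+1), FC q (m j) 1
      = FC q n (k+1) := by
  intro k
  induction k with
  | zero =>
    intro n
    rw [Finset.Nat.antidiagonalTuple_one, Finset.sum_singleton]
    simp
  | succ k IH =>
    intro n
    refine (tuple_succ (fun a => FC q a 1) (k+1) n).trans ?_
    simp_rw [IH]
    exact FC_conv q n (k+1)


lemma FC_eq_c (q : ℕ) (hq : 2 ≤ q) (n : ℕ) :
    FC q n 1 = (1 / (((q : ℚ) - 1) * n + 1)) * (Nat.choose (q * n) n : ℚ) := by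
  cases n with
  | zero => simp [FC_zero]
  | succ m =>
    rw [FC_succ]
    push_cast
    have hle : m ≤ q * (m+1) := by nlinarith
    have hprod : ∏ i ∈ range m, ((q:ℚ) * ((m:ℚ)+1) + 1 - 1 - i)
        = (((q*(m+1)).descFactorial m : ℕ) : ℚ) := by
      rw [Nat.descFactorial_eq_prod_range, Nat.cast_prod]
      apply Finset.prod_congr rfl
      intro i hi
      rw [Finset.mem_range] at hi
      rw [Nat.cast_sub (le_trans (le_of_lt hi) hle)]
      push_cast
      ring
    rw [hprod, Nat.descFactorial_eq_factorial_mul_choose]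
    have hch := Nat.choose_succ_right_eq (q*(m+1)) m
    have hsub : (q*(m+1) - m : ℕ) = (q-1)*(m+1) + 1 := by
      have h2 : 1 ≤ q := by omega
      cases q with
      | zero => omega
      | succ t =>
        have h3 : (t+1)*(m+1) = t*(m+1) + m + 1 := by ring
        have h4 : (t+1-1)*(m+1) = t*(m+1) := by simp
        omega
    rw [hsub] at hch
    have hchQ : ((Nat.choose (q*(m+1)) (m+1) : ℕ) : ℚ) * ((m:ℚ)+1)
        = ((Nat.choose (q*(m+1)) m : ℕ) : ℚ) * (((q:ℚ)-1) * ((m:ℚ)+1) + 1) := by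
      have := congrArg (fun x : ℕ => (x : ℚ)) hch
      push_cast at this
      have hq1 : (1:ℚ) ≤ (q:ℚ) := by exact_mod_cast (by omega : 1 ≤ q)
      rw [Nat.cast_sub (by omega : 1 ≤ q)] at this
      · push_cast at this ⊢
        linarith [this]
    have hq2 : (2:ℚ) ≤ (q:ℚ) := by exact_mod_cast hq
    have hden : ((q:ℚ)-1) * ((m:ℚ)+1) + 1 ≠ 0 := by nlinarith
    have hfac : (((m+1).factorial : ℕ) : ℚ) = ((m:ℚ)+1) * ((m.factorial : ℕ) : ℚ) := by
      rw [Nat.factorial_succ]; push_cast; ring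
    have hf0 : ((m.factorial : ℕ) : ℚ) ≠ 0 := by
      exact_mod_cast (Nat.factorial_pos m).ne'
    have hm1 : ((m:ℚ)+1) ≠ 0 := by positivity
    rw [hfac]
    push_cast at hchQ ⊢
    field_simp
    rw [eq_div_iff (by nlinarith)]
    nlinarith [hchQ]


/-- The `q`-th Fuss–Catalan numbers `c_N = (1/((q−1)N+1))·binom(qN, N)` satisfy `c_0 = 1`
and the recursion `c_N = Σ_{m_1+⋯+m_q = N−1} ∏_j c_{m_j}` for `N ≥ 1`. -/
theorem fuss_catalan_recursion (q : ℕ) (hq : 2 ≤ q) (c : ℕ → ℚ)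
    (hc : ∀ N : ℕ, c N = (1 / (((q : ℚ) - 1) * N + 1)) * (Nat.choose (q * N) N : ℚ)) :
    c 0 = 1 ∧
      ∀ N : ℕ, 1 ≤ N →
        c N = ∑ m ∈ Finset.Nat.antidiagonalTuple q (N - 1), ∏ j : Fin q, c (m j) := by
  have hcF : ∀ n, c n = FC q n 1 := fun n => by rw [hc n, FC_eq_c q hq n]
  constructor
  · rw [hc 0]; simp
  · intro N hN
    obtain ⟨k, rfl⟩ : ∃ k, q = k + 1 := ⟨q - 1, by omega⟩
    obtain ⟨M, rfl⟩ : ∃ M, N = M + 1 := ⟨N - 1, by omega⟩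
    simp only [Nat.add_sub_cancel]
    simp_rw [hcF]
    rw [FC_pow (k+1) k M, ← FC_shift (k+1) M]
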